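/- Let f_t(z) = z + z² + O(z³) uniformly in the parameter t (each f_t special, f_t(0)=0), and consider a non-autonomous orbit w_0 = w, w_{k+1} = f_{t_k}(w_k) with all |w_k| small enough that |1/w_{k+1} - 1/w_k + 1| ≤ K. If |w_0| < C/n³, then after n steps |w_n| ≤ |w_0|/(1 - n|w_0|(1+K)) ≤ C'·n²·|w_0|, where C' depends only on C and K. -/

import Mathlib

/-- vertical contraction control near a parabolic point. For any
`C > 0`, `K ≥ 0` there are `n₀` and `C'` such that for `n ≥ n₀`: any orbit with
`w 0 ≠ 0`, `|1/w_{k+1} - 1/w_k + 1| ≤ K` for `k < n` and `|w 0| < C/n³` satisfies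
`|w n| ≤ |w 0|/(1 - n|w 0|(1+K)) ≤ C'·n²·|w 0|`. -/
theorem stmt14 (C K : ℝ) (hC : 0 < C) (hK : 0 ≤ K) :
    ∃ n₀ : ℕ, ∃ C' : ℝ, 0 < C' ∧ ∀ n : ℕ, n₀ ≤ n → ∀ w : ℕ → ℂ, w 0 ≠ 0 →
      (∀ k < n, ‖1/(w (k+1)) - 1/(w k) + 1‖ ≤ K) →
      ‖w 0‖ < C/(n:ℝ)^3 →
      ‖w n‖ ≤ ‖w 0‖ / (1 - n * ‖w 0‖ * (1+K)) ∧
      ‖w n‖ ≤ C' * n^2 * ‖w 0‖ := by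
  refine ⟨⌈2*C*(1+K)⌉₊ + 1, 2, by norm_num, ?_⟩
  intro n hn w hw0 hstep hsmall
  have hn1 : 1 ≤ n := le_trans (Nat.le_add_left 1 _) hn
  have hnR : (1:ℝ) ≤ (n:ℝ) := by exact_mod_cast hn1
  have hnpos : (0:ℝ) < (n:ℝ) := by linarith
  have hnbig : 2*C*(1+K) < (n:ℝ) := by
    have : (⌈2*C*(1+K)⌉₊ + 1 : ℝ) ≤ (n:ℝ) := by exact_mod_cast hn
    have := Nat.le_ceil (2*C*(1+K))
    linarith
  have hw0pos : 0 < ‖w 0‖ := by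
    exact norm_pos_iff.mpr hw0
  have hu0 : ‖1/(w 0)‖ = 1 / ‖w 0‖ := by
    simp [norm_div]
  -- key induction: |u_k| ≥ |u_0| - k(1+K)
  have key : ∀ k, k ≤ n →
      ‖1/(w 0)‖ - k*(1+K) ≤ ‖1/(w k)‖ := by
    intro k
    induction k with
    | zero => intro _; simp
    | succ k ih =>
      intro hk
      have h1 := ih (Nat.le_of_succ_le hk)
      have h2 := hstep k (Nat.lt_of_succ_le hk)
      have h3 : ‖1/(w (k+1)) - 1/(w k)‖ ≤ K + 1 := by
        calc ‖1/(w (k+1)) - 1/(w k)‖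
            = ‖(1/(w (k+1)) - 1/(w k) + 1) + (-1)‖ := by ring_nf
          _ ≤ ‖1/(w (k+1)) - 1/(w k) + 1‖ + ‖-1‖ :=
              norm_add_le _ _
          _ ≤ K + 1 := by simpa using h2
      have h4 : ‖1/(w k)‖ - ‖1/(w (k+1))‖
          ≤ ‖1/(w (k+1)) - 1/(w k)‖ := by
        rw [norm_sub_rev]
        exact norm_sub_norm_le (1/(w k)) (1/(w (k+1)))
      push_cast
      nlinarith [h1, h3, h4]
  have hkey := key n le_rfl
  -- denominator positivity
  have hD : 0 < 1 - n * ‖w 0‖ * (1+K) := by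
    have h1 : (n:ℝ) * ‖w 0‖ * (1+K) < (n:ℝ) * (C/(n:ℝ)^3) * (1+K) := by
      have hK1 : (0:ℝ) < 1 + K := by linarith
      have := mul_lt_mul_of_pos_right (mul_lt_mul_of_pos_left hsmall hnpos) hK1
      linarith
    have h2 : (n:ℝ) * (C/(n:ℝ)^3) * (1+K) = C*(1+K)/(n:ℝ)^2 := by
      field_simp
    have h3 : C*(1+K)/(n:ℝ)^2 ≤ C*(1+K)/(n:ℝ) := by
      apply div_le_div_of_nonneg_left (by positivity) hnpos
      nlinarith
    have h4 : C*(1+K)/(n:ℝ) < 1/2 := by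
      rw [div_lt_div_iff₀ hnpos (by norm_num)]
      linarith
    linarith
  -- |u_n| ≥ 1/|w0| - n(1+K) > 0
  have hUn : (1/‖w 0‖ - n*(1+K)) ≤ ‖1/(w n)‖ := by
    rw [hu0] at hkey; exact hkey
  have hDeq : 1/‖w 0‖ - n*(1+K)
      = (1 - n * ‖w 0‖ * (1+K)) / ‖w 0‖ := by
    field_simp
  have hUnpos : 0 < 1/‖w 0‖ - n*(1+K) := by
    rw [hDeq]; positivity
  -- |w n| * |1/w n| ≤ 1
  have hprod : ‖w n‖ * ‖1/(w n)‖ ≤ 1 := by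
    rw [← norm_mul]
    rcases eq_or_ne (w n) 0 with h | h
    · simp [h]
    · rw [mul_one_div, div_self h]; simp
  have hwn : ‖w n‖ ≤ 1 / (1/‖w 0‖ - n*(1+K)) := by
    rw [le_div_iff₀ hUnpos]
    calc ‖w n‖ * (1/‖w 0‖ - n*(1+K))
        ≤ ‖w n‖ * ‖1/(w n)‖ :=
          mul_le_mul_of_nonneg_left hUn (norm_nonneg _)
      _ ≤ 1 := hprod
  have hmain : ‖w n‖
      ≤ ‖w 0‖ / (1 - n * ‖w 0‖ * (1+K)) := by
    rw [hDeq] at hwn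
    rw [one_div_div] at hwn
    exact hwn
  refine ⟨hmain, ?_⟩
  have hhalf : (1:ℝ)/2 ≤ 1 - n * ‖w 0‖ * (1+K) := by
    have h1 : (n:ℝ) * ‖w 0‖ * (1+K) < (n:ℝ) * (C/(n:ℝ)^3) * (1+K) := by
      have hK1 : (0:ℝ) < 1 + K := by linarith
      have := mul_lt_mul_of_pos_right (mul_lt_mul_of_pos_left hsmall hnpos) hK1
      linarith
    have h2 : (n:ℝ) * (C/(n:ℝ)^3) * (1+K) = C*(1+K)/(n:ℝ)^2 := by
      field_simp
    have h3 : C*(1+K)/(n:ℝ)^2 ≤ C*(1+K)/(n:ℝ) := by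
      apply div_le_div_of_nonneg_left (by positivity) hnpos
      nlinarith
    have h4 : C*(1+K)/(n:ℝ) < 1/2 := by
      rw [div_lt_div_iff₀ hnpos (by norm_num)]
      linarith
    linarith
  calc ‖w n‖
      ≤ ‖w 0‖ / (1 - n * ‖w 0‖ * (1+K)) := hmain
    _ ≤ ‖w 0‖ / (1/2) :=
        div_le_div_of_nonneg_left hw0pos.le (by norm_num) hhalf
    _ = 2 * ‖w 0‖ := by ring
    _ ≤ 2 * (n:ℝ)^2 * ‖w 0‖ := by
        have h5 : (1:ℝ) ≤ (n:ℝ)^2 := by nlinarith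
        nlinarith [hw0pos.le, h5]
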